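/- Let (L, ≤) be an infinite linearly ordered set and κ : L → {+, −, 0} a coloring. Suppose there is a natural number n such that L contains no increasing sequence a_1 < a_2 < ... < a_{3(n+1)} with κ(a_{3i+1}) = +, κ(a_{3i+2}) = −, κ(a_{3i+3}) = 0 for all i ≤ n. Then L can be partitioned into finitely many intervals L_1 ≺ L_2 ≺ ... ≺ L_m such that each L_i uses at most 2 colors, i.e. |κ(L_i)| ≤ 2 for each i ≤ m. -/

import Mathlib

inductive Color3 where
  | plus | minus | zero
deriving DecidableEq

instance : Fintype Color3 :=
  ⟨{Color3.plus, Color3.minus, Color3.zero}, fun x => by cases x <;> simp⟩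

private def pat3 (j : ℕ) : Color3 :=
  if j % 3 = 0 then Color3.plus else if j % 3 = 1 then Color3.minus else Color3.zero

private lemma pat3_ne_succ (j : ℕ) : pat3 j ≠ pat3 (j + 1) := by
  have h3 : j % 3 = 0 ∨ j % 3 = 1 ∨ j % 3 = 2 := by omega
  rcases h3 with h0 | h1 | h2
  · have h : (j + 1) % 3 = 1 := by omega
    simp [pat3, h0, h]
  · have h : (j + 1) % 3 = 2 := by omega
    simp [pat3, h1, h]
  · have h : (j + 1) % 3 = 0 := by omega
    simp [pat3, h2, h]

private def chainP {L : Type*} [LinearOrder L] (κ : L → Color3) (x : L) (k : ℕ) : Prop :=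
  ∃ a : Fin k → L, StrictMono a ∧ (∀ i, a i ≤ x) ∧ ∀ i : Fin k, κ (a i) = pat3 i.val

/-- An infinite linear order colored by `{+,-,0}` that admits no long
alternating `+,-,0` pattern decomposes into finitely many consecutive intervals
(the fibers of a monotone map onto `Fin (m+1)`), each using at most 2 colors. -/
theorem stmt0 {L : Type*} [LinearOrder L] [Infinite L] (κ : L → Color3)
    (h : ∃ n : ℕ, ¬ ∃ a : ℕ → L,
      (∀ i j : ℕ, i < j → j < 3 * (n + 1) → a i < a j) ∧
      (∀ i ≤ n, κ (a (3 * i)) = Color3.plus ∧ κ (a (3 * i + 1)) = Color3.minus ∧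
        κ (a (3 * i + 2)) = Color3.zero)) :
    ∃ (m : ℕ) (f : L → Fin (m + 1)), Monotone f ∧
      ∀ i : Fin (m + 1), (κ '' (f ⁻¹' {i})).ncard ≤ 2 := by
  classical
  obtain ⟨n, hn⟩ := h
  have hP0 : ∀ x : L, chainP κ x 0 := by
    intro x
    exact ⟨Fin.elim0, fun i => i.elim0, fun i => i.elim0, fun i => i.elim0⟩
  have hPmono : ∀ x y : L, x ≤ y → ∀ k, chainP κ x k → chainP κ y k := by
    rintro x y hxy k ⟨a, ha1, ha2, ha3⟩
    exact ⟨a, ha1, fun i => (ha2 i).trans hxy, ha3⟩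
  have hPtop : ∀ x : L, ¬ chainP κ x (3 * n + 3) := by
    rintro x ⟨a, ha1, ha2, ha3⟩
    apply hn
    refine ⟨fun i => if h : i < 3 * n + 3 then a ⟨i, h⟩ else a ⟨0, by omega⟩, ?_, ?_⟩
    · intro i j hij hj
      have hj' : j < 3 * n + 3 := by omega
      have hi' : i < 3 * n + 3 := by omega
      simp only [dif_pos hi', dif_pos hj']
      exact ha1 (show (⟨i, hi'⟩ : Fin _) < ⟨j, hj'⟩ from hij)
    · intro i hi
      have h0 : 3 * i < 3 * n + 3 := by omega
      have h1 : 3 * i + 1 < 3 * n + 3 := by omega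
      have h2 : 3 * i + 2 < 3 * n + 3 := by omega
      have e0 : (3 * i) % 3 = 0 := by omega
      have e1 : (3 * i + 1) % 3 = 1 := by omega
      have e2 : (3 * i + 2) % 3 = 2 := by omega
      refine ⟨?_, ?_, ?_⟩ <;>
      · simp only [dif_pos h0, dif_pos h1, dif_pos h2, ha3]
        simp [pat3, e0, e1, e2]
  set f0 : L → ℕ := fun x => Nat.findGreatest (chainP κ x) (3 * n + 2) with hf0def
  have hf0spec : ∀ x, chainP κ x (f0 x) := fun x =>
    Nat.findGreatest_spec (Nat.zero_le _) (hP0 x)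
  have hf0le : ∀ x, f0 x ≤ 3 * n + 2 := fun x => Nat.findGreatest_le _
  have hf0ge : ∀ (x : L) (k : ℕ), k ≤ 3 * n + 2 → chainP κ x k → k ≤ f0 x := fun x k hk hP =>
    Nat.le_findGreatest hk hP
  have hf0mono : Monotone f0 := by
    intro x y hxy
    exact hf0ge y (f0 x) (hf0le x) (hPmono x y hxy _ (hf0spec x))
  have key : ∀ x y : L, x < y → κ x = pat3 (f0 x) → f0 x < f0 y := by
    intro x y hxy hcol
    obtain ⟨a, ha1, ha2, ha3⟩ := hf0spec x
    have hlt : ∀ i : Fin (f0 x), a i < x := by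
      intro i
      by_cases hcase : i.val + 1 < f0 x
      · exact lt_of_lt_of_le (ha1 (show i < ⟨i.val + 1, hcase⟩ from Nat.lt_succ_self _))
          (ha2 ⟨i.val + 1, hcase⟩)
      · have hi : i.val + 1 = f0 x := by have := i.isLt; omega
        refine lt_of_le_of_ne (ha2 i) ?_
        intro he
        apply pat3_ne_succ i.val
        rw [hi]
        calc pat3 i.val = κ (a i) := (ha3 i).symm
          _ = κ x := by rw [he]
          _ = pat3 (f0 x) := hcol
    have hPy : chainP κ y (f0 x + 1) := by
      refine ⟨fun i => if h : i.val < f0 x then a ⟨i.val, h⟩ else x, ?_, ?_, ?_⟩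
      · intro i j hij
        by_cases hj : j.val < f0 x
        · have hi : i.val < f0 x := by
            have : i.val < j.val := hij
            omega
          simp only [dif_pos hi, dif_pos hj]
          exact ha1 (show (⟨i.val, hi⟩ : Fin (f0 x)) < ⟨j.val, hj⟩ from hij)
        · by_cases hi : i.val < f0 x
          · simp only [dif_pos hi, dif_neg hj]
            exact hlt ⟨i.val, hi⟩
          · exfalso
            have h1 : i.val = f0 x := by have := i.isLt; omega
            have h2 : j.val = f0 x := by have := j.isLt; omega
            have : i.val < j.val := hij
            omega
      · intro i
        by_cases hi : i.val < f0 x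
        · simp only [dif_pos hi]
          exact ((hlt ⟨i.val, hi⟩).le.trans hxy.le)
        · simp only [dif_neg hi]
          exact hxy.le
      · intro i
        by_cases hi : i.val < f0 x
        · simp only [dif_pos hi]
          exact ha3 ⟨i.val, hi⟩
        · have hieq : i.val = f0 x := by have := i.isLt; omega
          simp only [dif_neg hi]
          rw [hieq]
          exact hcol
    by_cases hkle : f0 x + 1 ≤ 3 * n + 2
    · exact lt_of_lt_of_le (Nat.lt_succ_self _) (hf0ge y (f0 x + 1) hkle hPy)
    · exfalso
      have hke : f0 x + 1 = 3 * n + 3 := by have := hf0le x; omega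
      exact hPtop y (by rw [← hke]; exact hPy)
  set g : L → ℕ := fun x => 2 * f0 x + (if κ x = pat3 (f0 x) then 1 else 0) with hgdef
  have hgmono : Monotone g := by
    intro x y hxy
    rcases eq_or_lt_of_le hxy with rfl | hxy'
    · exact le_rfl
    rcases lt_or_eq_of_le (hf0mono hxy) with h1 | h1
    · simp only [hgdef]
      split <;> split <;> omega
    · by_cases hc : κ x = pat3 (f0 x)
      · exact absurd (key x y hxy' hc) (by omega)
      · simp only [hgdef]
        rw [if_neg hc]
        split <;> omega
  have hglt : ∀ x, g x < 6 * n + 6 := by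
    intro x
    have := hf0le x
    simp only [hgdef]
    split <;> omega
  refine ⟨6 * n + 5, fun x => ⟨g x, by have := hglt x; omega⟩, ?_, ?_⟩
  · intro x y hxy
    exact Fin.mk_le_mk.mpr (hgmono hxy)
  · intro i
    rcases Nat.even_or_odd i.val with ⟨k, hk⟩ | ⟨k, hk⟩
    · -- even: i.val = k + k, fiber has f0 = k and κ x ≠ pat3 k
      have hsub : κ '' ((fun x => (⟨g x, by have := hglt x; omega⟩ : Fin (6 * n + 5 + 1))) ⁻¹' {i})
          ⊆ {c : Color3 | c ≠ pat3 k} := by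
        rintro c ⟨x, hx, rfl⟩
        simp only [Set.mem_preimage, Set.mem_singleton_iff] at hx
        have hgx : g x = i.val := by rw [← hx]
        simp only [hgdef] at hgx
        by_cases hc : κ x = pat3 (f0 x)
        · rw [if_pos hc] at hgx; omega
        · rw [if_neg hc] at hgx
          have hfk : f0 x = k := by omega
          rw [hfk] at hc
          exact hc
      have hpair : ∀ a b : Color3, ({a, b} : Set Color3).ncard ≤ 2 := fun a b =>
        le_trans (Set.ncard_insert_le _ _) (by simp)
      have h2 : ({c : Color3 | c ≠ pat3 k}).ncard ≤ 2 := by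
        rcases hp : pat3 k with _ | _ | _
        · refine le_trans (Set.ncard_le_ncard
            (t := ({Color3.minus, Color3.zero} : Set Color3)) ?_ (Set.toFinite _)) (hpair _ _)
          intro c hc
          simp only [Set.mem_setOf_eq] at hc
          cases c
          · exact absurd rfl hc
          · exact Set.mem_insert _ _
          · exact Set.mem_insert_of_mem _ rfl
        · refine le_trans (Set.ncard_le_ncard
            (t := ({Color3.plus, Color3.zero} : Set Color3)) ?_ (Set.toFinite _)) (hpair _ _)
          intro c hc
          simp only [Set.mem_setOf_eq] at hc
          cases c
          · exact Set.mem_insert _ _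
          · exact absurd rfl hc
          · exact Set.mem_insert_of_mem _ rfl
        · refine le_trans (Set.ncard_le_ncard
            (t := ({Color3.plus, Color3.minus} : Set Color3)) ?_ (Set.toFinite _)) (hpair _ _)
          intro c hc
          simp only [Set.mem_setOf_eq] at hc
          cases c
          · exact Set.mem_insert _ _
          · exact Set.mem_insert_of_mem _ rfl
          · exact absurd rfl hc
      exact le_trans (Set.ncard_le_ncard hsub (Set.toFinite _)) h2
    · -- odd: i.val = 2k+1, fiber has κ x = pat3 k
      have hsub : κ '' ((fun x => (⟨g x, by have := hglt x; omega⟩ : Fin (6 * n + 5 + 1))) ⁻¹' {i})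
          ⊆ {pat3 k} := by
        rintro c ⟨x, hx, rfl⟩
        simp only [Set.mem_preimage, Set.mem_singleton_iff] at hx
        have hgx : g x = i.val := by rw [← hx]
        simp only [hgdef] at hgx
        by_cases hc : κ x = pat3 (f0 x)
        · rw [if_pos hc] at hgx
          have hfk : f0 x = k := by omega
          rw [hfk] at hc
          simpa using hc
        · rw [if_neg hc] at hgx; omega
      exact le_trans (Set.ncard_le_ncard hsub (Set.toFinite _)) (by simp)
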